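/- Let G = (V,E) be a connected graph on N ≥ 2 vertices with c_{ij} = 1/|N_i| + 1/|N_j| and b_i = (1/2)∑_{j∈N_i} c_{ij}. Then for every edge {i,j} ∈ E, 1 ≤ (b_i + b_j)/c_{ij} ≤ (N² − 2N + 2)/2. -/

import Mathlib

theorem stmt12 {V : Type*} [Fintype V] (G : SimpleGraph V) [DecidableRel G.Adj]
    (hconn : G.Connected) (hN : 2 ≤ Fintype.card V)
    (c : V → V → ℝ)
    (hc : ∀ i j, c i j = 1 / (G.degree i : ℝ) + 1 / (G.degree j : ℝ))
    (b : V → ℝ)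
    (hb : ∀ i, b i = (1 / 2) * ∑ j ∈ G.neighborFinset i, c i j) :
    ∀ i j, G.Adj i j →
      1 ≤ (b i + b j) / c i j ∧
      (b i + b j) / c i j ≤ ((Fintype.card V : ℝ) ^ 2 - 2 * (Fintype.card V : ℝ) + 2) / 2 := by
  intro i j hadj
  classical
  have hdeg1 : ∀ u v : V, G.Adj u v → 1 ≤ (G.degree u : ℝ) := by
    intro u v h
    exact_mod_cast (G.degree_pos_iff_exists_adj u).mpr ⟨v, h⟩
  have hdegN : ∀ u : V, (G.degree u : ℝ) ≤ (Fintype.card V : ℝ) - 1 := by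
    intro u
    have h := G.degree_lt_card_verts u
    have h' : (G.degree u : ℝ) < (Fintype.card V : ℝ) := by exact_mod_cast h
    have h'' : (G.degree u : ℝ) + 1 ≤ (Fintype.card V : ℝ) := by
      exact_mod_cast Nat.succ_le_of_lt h
    linarith
  have ha1 : 1 ≤ (G.degree i : ℝ) := hdeg1 i j hadj
  have hb1 : 1 ≤ (G.degree j : ℝ) := hdeg1 j i hadj.symm
  have ha0 : (0:ℝ) < (G.degree i : ℝ) := by linarith
  have hbb0 : (0:ℝ) < (G.degree j : ℝ) := by linarith
  have hcpos : 0 < c i j := by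
    rw [hc]
    positivity
  have hcsymm : c j i = c i j := by rw [hc, hc]; ring
  -- nonnegativity of all c-terms
  have hcnn : ∀ u v : V, 0 ≤ c u v := by
    intro u v; rw [hc]; positivity
  -- lower bound on b
  have hlow : ∀ u v : V, G.Adj u v → (1/2) * c u v ≤ b u := by
    intro u v h
    rw [hb]
    have hmem : v ∈ G.neighborFinset u := (G.mem_neighborFinset u v).mpr h
    have := Finset.single_le_sum (f := fun k => c u k)
      (fun k _ => hcnn u k) hmem
    linarith
  -- upper bound on b
  have hup : ∀ u v : V, G.Adj u v →
      b u ≤ (1/2) * (c u v + ((G.degree u : ℝ) - 1 / (G.degree u : ℝ))) := by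
    intro u v h
    have hu1 : 1 ≤ (G.degree u : ℝ) := hdeg1 u v h
    have hu0 : (0:ℝ) < (G.degree u : ℝ) := by linarith
    rw [hb]
    have hmem : v ∈ G.neighborFinset u := (G.mem_neighborFinset u v).mpr h
    have hsplit : c u v + ∑ k ∈ (G.neighborFinset u).erase v, c u k
        = ∑ k ∈ G.neighborFinset u, c u k := Finset.add_sum_erase _ _ hmem
    have hbound : ∑ k ∈ (G.neighborFinset u).erase v, c u k
        ≤ ((G.neighborFinset u).erase v).card * (1 / (G.degree u : ℝ) + 1) := by
      have hsc : ((G.neighborFinset u).erase v).card * (1 / (G.degree u : ℝ) + 1)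
          = ∑ _k ∈ (G.neighborFinset u).erase v, (1 / (G.degree u : ℝ) + 1) := by
        rw [Finset.sum_const, nsmul_eq_mul]
      rw [hsc]
      refine Finset.sum_le_sum ?_
      intro k hk
      have hk' : k ∈ G.neighborFinset u := Finset.mem_of_mem_erase hk
      have hkadj : G.Adj u k := (G.mem_neighborFinset u k).mp hk'
      have hk1 : 1 ≤ (G.degree k : ℝ) := hdeg1 k u hkadj.symm
      have : 1 / (G.degree k : ℝ) ≤ 1 := by
        rw [div_le_one (by linarith)]; linarith
      rw [hc]
      linarith
    have hcard : (((G.neighborFinset u).erase v).card : ℝ) = (G.degree u : ℝ) - 1 := by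
      rw [Finset.card_erase_of_mem hmem]
      have : 1 ≤ G.degree u := by exact_mod_cast hu1
      rw [← G.card_neighborFinset_eq_degree] at this ⊢
      push_cast [Nat.cast_sub this]
      simp
    rw [hcard] at hbound
    have hkey : ((G.degree u : ℝ) - 1) * (1 / (G.degree u : ℝ) + 1)
        = (G.degree u : ℝ) - 1 / (G.degree u : ℝ) := by
      field_simp
      ring
    nlinarith [hbound, hsplit]
  constructor
  · rw [le_div_iff₀ hcpos, one_mul]
    have h1 := hlow i j hadj
    have h2 := hlow j i hadj.symm
    rw [hcsymm] at h2
    linarith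
  · rw [div_le_iff₀ hcpos]
    have h1 := hup i j hadj
    have h2 := hup j i hadj.symm
    rw [hcsymm] at h2
    set a : ℝ := (G.degree i : ℝ)
    set d : ℝ := (G.degree j : ℝ)
    have hsum : b i + b j ≤ c i j + (a + d - c i j) / 2 := by
      have : 1 / a + 1 / d = c i j := (hc i j).symm
      linarith
    have heq : ((1 + a * d) / 2) * c i j = c i j + (a + d - c i j) / 2 := by
      have hcad : c i j = 1 / a + 1 / d := hc i j
      clear_value a d
      rw [hcad]
      field_simp
      ring
    have habN : a * d ≤ ((Fintype.card V : ℝ) - 1) ^ 2 := by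
      have h3 := hdegN i
      have h4 := hdegN j
      nlinarith
    have hfin : ((1 + a * d) / 2) * c i j
        ≤ (((Fintype.card V : ℝ) ^ 2 - 2 * (Fintype.card V : ℝ) + 2) / 2) * c i j := by
      have : (1 + a * d) / 2 ≤ ((Fintype.card V : ℝ) ^ 2 - 2 * (Fintype.card V : ℝ) + 2) / 2 := by
        nlinarith
      nlinarith [hcpos.le]
    linarith [hsum, heq.ge, hfin]
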